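/- Weak duality for the rational minimax problem: let ξ* = p*/q* with deg p* ≤ n₁, deg q* ≤ n₂ and q*(xⱼ) ≠ 0 for all j, and let η_∞ = max_j |fⱼ − p*(xⱼ)/q*(xⱼ)|. Then for every nonnegative weight vector w ∈ ℝ^m, d₂(w) ≤ η_∞², where d₂(w) is the infimum of Σⱼ wⱼ|fⱼ q(xⱼ) − p(xⱼ)|² over polynomial pairs (p, q) of degrees at most (n₁, n₂) with Σⱼ wⱼ|q(xⱼ)|² = 1. -/

import Mathlib

open Polynomial

/-- The dual objective function `d₂(w)`. -/
noncomputable def d2 {m : ℕ} (n₁ n₂ : ℕ) (x f : Fin m → ℂ) (w : Fin m → ℝ) : ℝ :=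
  sInf {s : ℝ | ∃ p q : Polynomial ℂ, p.natDegree ≤ n₁ ∧ q.natDegree ≤ n₂ ∧
    (∑ j, w j * ‖q.eval (x j)‖ ^ 2) = 1 ∧
    s = ∑ j, w j * ‖f j * q.eval (x j) - p.eval (x j)‖ ^ 2}

/-- Weak duality: `d₂(w) ≤ η∞²` for every nonnegative weight vector `w`. -/
theorem stmt2 {m : ℕ} (n₁ n₂ : ℕ) (hm : n₁ + n₂ + 2 ≤ m) (x : Fin m → ℂ)
    (hx : Function.Injective x) (f : Fin m → ℂ) (p q : Polynomial ℂ)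
    (hp : p.natDegree ≤ n₁) (hq : q.natDegree ≤ n₂)
    (hq0 : ∀ j, q.eval (x j) ≠ 0) (η : ℝ)
    (hub : ∀ j, ‖f j - p.eval (x j) / q.eval (x j)‖ ≤ η)
    (hatt : ∃ j, ‖f j - p.eval (x j) / q.eval (x j)‖ = η)
    (w : Fin m → ℝ) (hw : ∀ j, 0 ≤ w j) :
    d2 n₁ n₂ x f w ≤ η ^ 2 := by
  have hm0 : 0 < m := by omega
  have hη0 : 0 ≤ η := le_trans (norm_nonneg _) (hub ⟨0, hm0⟩)
  set S := ∑ j, w j * ‖q.eval (x j)‖ ^ 2 with hS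
  have hterm : ∀ j ∈ Finset.univ, 0 ≤ w j * ‖q.eval (x j)‖ ^ 2 := by
    intro j _; exact mul_nonneg (hw j) (by positivity)
  have hS0 : 0 ≤ S := Finset.sum_nonneg hterm
  -- key per-point bound: |f q - p| ≤ η |q|
  have hkey : ∀ j, ‖f j * q.eval (x j) - p.eval (x j)‖ ≤
      η * ‖q.eval (x j)‖ := by
    intro j
    have h1 : f j * q.eval (x j) - p.eval (x j) =
        (f j - p.eval (x j) / q.eval (x j)) * q.eval (x j) := by
      rw [sub_mul, div_mul_cancel₀ _ (hq0 j)]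
    rw [h1, norm_mul]
    exact mul_le_mul_of_nonneg_right (hub j) (norm_nonneg _)
  rcases eq_or_lt_of_le hS0 with h0 | hpos
  · -- all weights zero ⇒ feasible set empty ⇒ d₂ = 0
    have hw0 : ∀ j, w j = 0 := by
      intro j
      have := (Finset.sum_eq_zero_iff_of_nonneg hterm).mp h0.symm j (Finset.mem_univ j)
      have hq2 : ‖q.eval (x j)‖ ^ 2 ≠ 0 :=
        pow_ne_zero 2 (norm_ne_zero_iff.mpr (hq0 j))
      exact (mul_eq_zero.mp this).resolve_right hq2
    have hempty : {s : ℝ | ∃ p q : Polynomial ℂ, p.natDegree ≤ n₁ ∧ q.natDegree ≤ n₂ ∧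
        (∑ j, w j * ‖q.eval (x j)‖ ^ 2) = 1 ∧
        s = ∑ j, w j * ‖f j * q.eval (x j) - p.eval (x j)‖ ^ 2} = ∅ := by
      ext s
      simp only [Set.mem_setOf_eq, Set.mem_empty_iff_false, iff_false]
      rintro ⟨p', q', _, _, hcon, _⟩
      simp [hw0] at hcon
    rw [d2, hempty, Real.sInf_empty]
    positivity
  · -- scale (p, q) by c = S^{-1/2}
    set c : ℝ := (Real.sqrt S)⁻¹ with hc
    have hsqrt : 0 < Real.sqrt S := Real.sqrt_pos.mpr hpos
    have hc0 : 0 < c := inv_pos.mpr hsqrt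
    have hc2 : c ^ 2 * S = 1 := by
      rw [hc, inv_pow, Real.sq_sqrt hS0]
      · exact inv_mul_cancel₀ (ne_of_gt hpos)
    set p' : Polynomial ℂ := Polynomial.C (c : ℂ) * p with hp'
    set q' : Polynomial ℂ := Polynomial.C (c : ℂ) * q with hq'
    have habsc : ‖(c : ℂ)‖ = c := by
      rw [Complex.norm_of_nonneg hc0.le]
    have hevq : ∀ j, ‖q'.eval (x j)‖ ^ 2 =
        c ^ 2 * ‖q.eval (x j)‖ ^ 2 := by
      intro j; rw [hq', Polynomial.eval_mul, Polynomial.eval_C, norm_mul, habsc, mul_pow]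
    have hcon : (∑ j, w j * ‖q'.eval (x j)‖ ^ 2) = 1 := by
      calc (∑ j, w j * ‖q'.eval (x j)‖ ^ 2)
          = c ^ 2 * S := by
            rw [hS, Finset.mul_sum]
            exact Finset.sum_congr rfl fun j _ => by rw [hevq j]; ring
        _ = 1 := hc2
    set v : ℝ := ∑ j, w j * ‖f j * q'.eval (x j) - p'.eval (x j)‖ ^ 2 with hv
    have hmem : v ∈ {s : ℝ | ∃ p q : Polynomial ℂ, p.natDegree ≤ n₁ ∧ q.natDegree ≤ n₂ ∧
        (∑ j, w j * ‖q.eval (x j)‖ ^ 2) = 1 ∧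
        s = ∑ j, w j * ‖f j * q.eval (x j) - p.eval (x j)‖ ^ 2} := by
      refine ⟨p', q', le_trans (Polynomial.natDegree_C_mul_le _ _) hp,
        le_trans (Polynomial.natDegree_C_mul_le _ _) hq, hcon, rfl⟩
    have hbdd : BddBelow {s : ℝ | ∃ p q : Polynomial ℂ, p.natDegree ≤ n₁ ∧ q.natDegree ≤ n₂ ∧
        (∑ j, w j * ‖q.eval (x j)‖ ^ 2) = 1 ∧
        s = ∑ j, w j * ‖f j * q.eval (x j) - p.eval (x j)‖ ^ 2} := by
      refine ⟨0, ?_⟩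
      rintro s ⟨p'', q'', _, _, _, rfl⟩
      exact Finset.sum_nonneg fun j _ => mul_nonneg (hw j) (by positivity)
    have hle : v ≤ η ^ 2 := by
      have hvle : v ≤ ∑ j, w j * (c ^ 2 * (η ^ 2 * ‖q.eval (x j)‖ ^ 2)) := by
        apply Finset.sum_le_sum
        intro j _
        apply mul_le_mul_of_nonneg_left _ (hw j)
        have h1 : f j * q'.eval (x j) - p'.eval (x j) =
            (c : ℂ) * (f j * q.eval (x j) - p.eval (x j)) := by
          rw [hp', hq', Polynomial.eval_mul, Polynomial.eval_mul, Polynomial.eval_C]; ring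
        rw [h1, norm_mul, habsc, mul_pow]
        have := hkey j
        have h2 : ‖f j * q.eval (x j) - p.eval (x j)‖ ^ 2 ≤
            η ^ 2 * ‖q.eval (x j)‖ ^ 2 := by
          rw [← mul_pow]
          exact pow_le_pow_left₀ (norm_nonneg _) this 2
        nlinarith [sq_nonneg c]
      calc v ≤ ∑ j, w j * (c ^ 2 * (η ^ 2 * ‖q.eval (x j)‖ ^ 2)) := hvle
        _ = η ^ 2 * (c ^ 2 * S) := by
            rw [hS, Finset.mul_sum, Finset.mul_sum]
            exact Finset.sum_congr rfl fun j _ => by ring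
        _ = η ^ 2 := by rw [hc2, mul_one]
    exact le_trans (csInf_le hbdd hmem) hle
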